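/- Let q and r be distinct primes and let D = V ⋊ Z/r be as above. If g = (v, 0) ∈ V has order q, then the conjugacy class of g in D is {(ζ^i v, 0) : 0 ≤ i ≤ r-1}, a set of exactly r elements. -/

import Mathlib

open Multiplicative

/-- Left multiplication by a unit, as a multiplicative automorphism of the additive
group of the field, written multiplicatively. -/
def unitMulAut (F : Type*) [Field F] : Fˣ →* MulAut (Multiplicative F) where
  toFun u := AddEquiv.toMultiplicative (AddAut.mulLeft u)
  map_one' := by ext x; change ((1 : Fˣ) : F) * toAdd x = toAdd x; simp
  map_mul' u v := by ext x; exact congrArg ofAdd (mul_assoc (u : F) v (toAdd x))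

/-- The group `D = V ⋊ ℤ/r`, where `V` is the additive group of the field `F` and the
generator of `ℤ/r` acts by multiplication by `ζ = χ (ofAdd 1)`; multiplication is
`(v,i)·(w,j) = (v + ζ^i w, i+j)`. -/
abbrev DD {r : ℕ} (F : Type*) [Field F] (χ : Multiplicative (ZMod r) →* Fˣ) :=
  Multiplicative F ⋊[(unitMulAut F).comp χ] Multiplicative (ZMod r)
theorem conjugacy_class_of_order_q_element {q r : ℕ} (hq : q.Prime) (hr : r.Prime)
    (hqr : q ≠ r) {F : Type*} [Field F] [Fintype F] (hF : Fintype.card F = q ^ (r - 1))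
    (χ : Multiplicative (ZMod r) →* Fˣ) (hχ : orderOf (χ (ofAdd 1)) = r)
    (g : DD F χ) (hg : g.right = 1) (hord : orderOf g = q) :
    {h : DD F χ | IsConj g h} =
      {h : DD F χ | ∃ i : ZMod r, h = ⟨ofAdd ((χ (ofAdd i) : F) * toAdd g.left), 1⟩} ∧
    {h : DD F χ | IsConj g h}.ncard = r := by
  haveI : NeZero r := ⟨hr.ne_zero⟩
  set v : F := toAdd g.left with hv
  have hg1 : g = ⟨ofAdd v, 1⟩ := by
    apply SemidirectProduct.ext <;> simp [hv, hg]
  have hvne : v ≠ 0 := by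
    intro h
    have : g = 1 := by rw [hg1, h]; rfl
    rw [this, orderOf_one] at hord
    exact hq.one_lt.ne' hord.symm
  -- conjugation formula
  have conj_eq : ∀ c : DD F χ, c * g * c⁻¹ =
      ⟨ofAdd ((χ c.right : F) * v), 1⟩ := by
    intro c
    apply SemidirectProduct.ext
    · show c.left * ((unitMulAut F).comp χ) c.right g.left *
        ((unitMulAut F).comp χ) (c.right * g.right) (((unitMulAut F).comp χ) c.right⁻¹ c.left⁻¹) = _
      rw [hg]
      show c.left * ofAdd ((χ c.right : F) * v) *
        ofAdd ((χ (c.right * 1) : F) * ((χ c.right⁻¹ : F) * toAdd c.left⁻¹)) = _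
      have : (toAdd c.left⁻¹ : F) = - toAdd c.left := rfl
      rw [mul_one, this]
      have hcc : (χ c.right : F) * ((χ c.right⁻¹ : F) * (- toAdd c.left)) = - toAdd c.left := by
        rw [← mul_assoc, ← Units.val_mul, ← map_mul, mul_inv_cancel, map_one, Units.val_one, one_mul]
      rw [hcc]
      show ofAdd (toAdd c.left + (χ c.right : F) * v + - toAdd c.left) = _
      congr 1
      ring
    · show c.right * g.right * c.right⁻¹ = 1
      rw [hg, mul_one, mul_inv_cancel]
  have key : {h : DD F χ | IsConj g h} =
      {h : DD F χ | ∃ i : ZMod r, h = ⟨ofAdd ((χ (ofAdd i) : F) * toAdd g.left), 1⟩} := by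
    ext h
    simp only [Set.mem_setOf_eq, isConj_iff]
    constructor
    · rintro ⟨c, rfl⟩
      exact ⟨toAdd c.right, by rw [conj_eq]; rfl⟩
    · rintro ⟨i, rfl⟩
      exact ⟨⟨1, ofAdd i⟩, by rw [conj_eq]⟩
  refine ⟨key, ?_⟩
  rw [key]
  have himg : {h : DD F χ | ∃ i : ZMod r, h = ⟨ofAdd ((χ (ofAdd i) : F) * toAdd g.left), 1⟩}
      = Set.range (fun i : ZMod r => (⟨ofAdd ((χ (ofAdd i) : F) * v), 1⟩ : DD F χ)) := by
    ext h; simp [Set.range, eq_comm, hv]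
  have hinj : Function.Injective
      (fun i : ZMod r => (⟨ofAdd ((χ (ofAdd i) : F) * v), 1⟩ : DD F χ)) := by
    intro a b hab
    have h1 : (χ (ofAdd a) : F) * v = (χ (ofAdd b) : F) * v := by
      have := congrArg (fun x : DD F χ => toAdd x.left) hab
      simpa using this
    have h2 : χ (ofAdd a) = χ (ofAdd b) := by
      have := mul_right_cancel₀ hvne h1
      exact Units.ext this
    have ha : ofAdd a = (ofAdd (1 : ZMod r)) ^ a.val := by
      rw [← ofAdd_nsmul]; congr 1; simp [nsmul_eq_mul]
    have hb : ofAdd b = (ofAdd (1 : ZMod r)) ^ b.val := by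
      rw [← ofAdd_nsmul]; congr 1; simp [nsmul_eq_mul]
    rw [ha, hb, map_pow, map_pow, pow_inj_mod, hχ,
      Nat.mod_eq_of_lt (ZMod.val_lt a), Nat.mod_eq_of_lt (ZMod.val_lt b)] at h2
    exact ZMod.val_injective r h2
  rw [himg, ← Set.image_univ, Set.ncard_image_of_injective _ hinj, Set.ncard_univ, Nat.card_zmod]
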